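/- Let G = (V, E) be a cocomparability graph and let σ be an umbrella-free ordering of G. Then there exists an ordering τ of V such that: (i) τ satisfies the LexDFS 4-point condition; (ii) τ is umbrella-free; and (iii) for every pair of vertices u, v with uv ∉ E, u ≺_σ v if and only if v ≺_τ u. In particular, every cocomparability graph admits an ordering that is simultaneously a LexDFS ordering and a cocomparability ordering. -/

import Mathlib

/-- `σ` is an umbrella-free (cocomparability) ordering of `G`. -/
def UmbrellaFree {V : Type*} {n : ℕ} (G : SimpleGraph V) (σ : Fin n ≃ V) : Prop :=
  ∀ i j k : Fin n, i < j → j < k → G.Adj (σ i) (σ k) →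
    G.Adj (σ i) (σ j) ∨ G.Adj (σ j) (σ k)

/-- The LexDFS 4-point condition for the ordering `σ` of `G`. -/
def FourPointLexDFS {V : Type*} {n : ℕ} (G : SimpleGraph V) (σ : Fin n ≃ V) : Prop :=
  ∀ i j k : Fin n, i < j → j < k → G.Adj (σ i) (σ k) → ¬ G.Adj (σ i) (σ j) →
    ∃ d : Fin n, i < d ∧ d < j ∧ G.Adj (σ d) (σ j) ∧ ¬ G.Adj (σ d) (σ k)

namespace LexDFSAux

open Finset Finset.Colex Classical

variable {n : ℕ}

/-- The LexDFS label of `x` w.r.t. the list `l` of already visited vertices: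
the set of positions in `l` of visited neighbours of `x`. -/
noncomputable def lab (A : Fin n → Fin n → Prop) (l : List (Fin n)) (x : Fin n) : Finset ℕ :=
  (Finset.range l.length).filter fun j => ∃ h : j < l.length, A (l.get ⟨j, h⟩) x

lemma lab_lt (A : Fin n → Fin n → Prop) (l : List (Fin n)) (x : Fin n) {m : ℕ}
    (h : m ∈ lab A l x) : m < l.length := by
  rw [lab, Finset.mem_filter, Finset.mem_range] at h
  exact h.1

/-- The selection key: colex-compare labels (most recent visited neighbour wins),
break ties by the position in the original ordering. -/
noncomputable def key (A : Fin n → Fin n → Prop) (l : List (Fin n)) (x : Fin n) :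
    Colex (Finset ℕ) ×ₗ Fin n :=
  toLex (toColex (lab A l x), x)

/-- Pick the unvisited vertex with maximal key. -/
noncomputable def pick (A : Fin n → Fin n → Prop) (hpos : 0 < n) (l : List (Fin n)) : Fin n :=
  if h : (Finset.univ \ l.toFinset).Nonempty then
    (Finset.exists_max_image _ (key A l) h).choose
  else ⟨0, hpos⟩

/-- The LexDFS⁺ visit sequence, built greedily. -/
noncomputable def g (A : Fin n → Fin n → Prop) (hpos : 0 < n) : ℕ → List (Fin n)
  | 0 => []
  | k + 1 => g A hpos k ++ [pick A hpos (g A hpos k)]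

lemma pick_spec (A : Fin n → Fin n → Prop) (hpos : 0 < n) (l : List (Fin n))
    (h : (Finset.univ \ l.toFinset).Nonempty) :
    pick A hpos l ∉ l ∧ ∀ y : Fin n, y ∉ l → key A l y ≤ key A l (pick A hpos l) := by
  rw [pick, dif_pos h]
  obtain ⟨hmem, hmax⟩ :=
    (Finset.exists_max_image (Finset.univ \ l.toFinset) (key A l) h).choose_spec
  refine ⟨?_, fun y hy => hmax y ?_⟩
  · have := (Finset.mem_sdiff.1 hmem).2
    simpa [List.mem_toFinset] using this
  · simp [Finset.mem_sdiff, List.mem_toFinset, hy]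

lemma g_spec (A : Fin n → Fin n → Prop) (hpos : 0 < n) :
    ∀ k, k ≤ n → (g A hpos k).length = k ∧ (g A hpos k).Nodup := by
  intro k
  induction k with
  | zero => intro _; simp [g]
  | succ k ih =>
    intro hk
    obtain ⟨hlen, hnd⟩ := ih (Nat.le_of_succ_le hk)
    have hkn : k < n := hk
    have hne : (Finset.univ \ (g A hpos k).toFinset).Nonempty := by
      rw [Finset.sdiff_nonempty]
      intro hsub
      have h1 : (Finset.univ : Finset (Fin n)).card ≤ (g A hpos k).toFinset.card :=
        Finset.card_le_card hsub
      have h2 : (g A hpos k).toFinset.card ≤ (g A hpos k).length :=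
        (g A hpos k).toFinset_card_le
      rw [Finset.card_univ, Fintype.card_fin] at h1
      omega
    obtain ⟨hnotmem, _⟩ := pick_spec A hpos (g A hpos k) hne
    constructor
    · simp [g, hlen]
    · rw [g, List.nodup_append]
      exact ⟨hnd, List.nodup_singleton _, by
        intro a ha b hb
        simp only [List.mem_singleton] at hb
        subst hb
        exact fun h => hnotmem (h ▸ ha)⟩

lemma g_prefix (A : Fin n → Fin n → Prop) (hpos : 0 < n) :
    ∀ {k m : ℕ}, k ≤ m → g A hpos k <+: g A hpos m := by
  intro k m h
  induction m with
  | zero =>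
    have : k = 0 := Nat.le_zero.1 h
    subst this; exact List.prefix_refl _
  | succ m ih =>
    rcases eq_or_lt_of_le h with h' | h'
    · subst h'; exact List.prefix_refl _
    · have hk : k ≤ m := Nat.lt_succ_iff.1 h'
      exact (ih hk).trans ⟨[pick A hpos (g A hpos m)], rfl⟩

/-- The main construction: an ordering `ε` of the positions w.r.t. the original
umbrella-free order, satisfying the 4-point property and reversing non-edges. -/
lemma main_construction (A : Fin n → Fin n → Prop) (hpos : 0 < n)
    (hsym : ∀ i j, A i j → A j i)
    (humb : ∀ i j k : Fin n, i < j → j < k → A i k → A i j ∨ A j k) :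
    ∃ ε : Fin n ≃ Fin n,
      (∀ i j k : Fin n, i < j → j < k → A (ε i) (ε k) → ¬ A (ε i) (ε j) →
        ∃ d : Fin n, i < d ∧ d < j ∧ A (ε d) (ε j) ∧ ¬ A (ε d) (ε k)) ∧
      (∀ p q : Fin n, ¬ A p q → p < q → ε.symm q < ε.symm p) := by
  classical
  obtain ⟨hlen, hnd⟩ := g_spec A hpos n le_rfl
  have hinj : Function.Injective (fun i : Fin n => (g A hpos n).get (Fin.cast hlen.symm i)) := by
    intro i j hij
    have := List.nodup_iff_injective_get.1 hnd hij
    exact Fin.ext (by simpa using congrArg Fin.val this)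
  have hbij := (Finite.injective_iff_bijective).1 hinj
  set ε : Fin n ≃ Fin n := Equiv.ofBijective _ hbij with hεdef
  have hεget : ∀ i : Fin n, ε i = (g A hpos n).get (Fin.cast hlen.symm i) := fun _ => rfl
  -- entries of prefixes agree with ε
  have F1 : ∀ (k : ℕ) (hk : k ≤ n) (j : ℕ) (hj : j < (g A hpos k).length),
      (g A hpos k).get ⟨j, hj⟩ =
        ε ⟨j, lt_of_lt_of_le (by rwa [(g_spec A hpos k hk).1] at hj) hk⟩ := by
    intro k hk j hj
    have hpre := g_prefix A hpos hk
    rw [hεget]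
    simp only [List.get_eq_getElem, Fin.coe_cast]
    exact hpre.getElem hj
  -- membership in prefixes
  have F2 : ∀ (k : ℕ) (hk : k ≤ n) (y : Fin n), y ∈ g A hpos k ↔ (ε.symm y : ℕ) < k := by
    intro k hk y
    constructor
    · intro hy
      obtain ⟨i, hi⟩ := List.mem_iff_get.1 hy
      have hik : (i : ℕ) < k := by
        have := (g_spec A hpos k hk).1; omega
      have hy' : y = ε ⟨(i : ℕ), lt_of_lt_of_le hik hk⟩ := by
        rw [← hi, F1 k hk i i.isLt]
      have hsymm : ε.symm y = ⟨(i : ℕ), lt_of_lt_of_le hik hk⟩ := by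
        rw [Equiv.symm_apply_eq]; exact hy' 
      rw [hsymm]; exact hik
    · intro hy
      have hsn : ((ε.symm y : Fin n) : ℕ) < (g A hpos k).length := by
        have := (g_spec A hpos k hk).1; omega
      have h1 : (g A hpos k).get ⟨((ε.symm y : Fin n) : ℕ), hsn⟩ = ε (ε.symm y) := by
        rw [F1 k hk _ hsn]
      rw [Equiv.apply_symm_apply] at h1
      rw [← h1]
      exact List.get_mem _ _
  -- candidates are nonempty at every step
  have hne : ∀ k : ℕ, k < n → (Finset.univ \ (g A hpos k).toFinset).Nonempty := by
    intro k hk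
    rw [Finset.sdiff_nonempty]
    intro hsub
    have h1 : (Finset.univ : Finset (Fin n)).card ≤ (g A hpos k).toFinset.card :=
      Finset.card_le_card hsub
    have h2 : (g A hpos k).toFinset.card ≤ (g A hpos k).length :=
      (g A hpos k).toFinset_card_le
    have h3 := (g_spec A hpos k (le_of_lt hk)).1
    rw [Finset.card_univ, Fintype.card_fin] at h1
    omega
  -- the vertex visited at step s is the picked one
  have F3 : ∀ s : Fin n, ε s = pick A hpos (g A hpos (s : ℕ)) := by
    intro s
    have hs1 : (s : ℕ) + 1 ≤ n := s.isLt
    have hlen1 : (g A hpos ((s : ℕ) + 1)).length = (s : ℕ) + 1 := (g_spec A hpos _ hs1).1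
    have hlens : (g A hpos (s : ℕ)).length = (s : ℕ) := (g_spec A hpos _ (le_of_lt s.isLt)).1
    have hget : (g A hpos ((s : ℕ) + 1)).get ⟨(s : ℕ), by omega⟩ =
        pick A hpos (g A hpos (s : ℕ)) := by
      simp only [List.get_eq_getElem, g]
      rw [List.getElem_append_right (by omega)]
      simp [hlens]
    have h2 := F1 ((s : ℕ) + 1) hs1 (s : ℕ) (by omega)
    rw [hget] at h2
    have : ε ⟨(s : ℕ), s.isLt⟩ = pick A hpos (g A hpos (s : ℕ)) := by
      rw [← h2]
    simpa using this
  -- the selection inequality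
  have F4 : ∀ s : Fin n, ∀ y : Fin n, (s : ℕ) ≤ (ε.symm y : ℕ) →
      key A (g A hpos (s : ℕ)) y ≤ key A (g A hpos (s : ℕ)) (ε s) := by
    intro s y hy
    have hynot : y ∉ g A hpos (s : ℕ) := by
      rw [F2 (s : ℕ) (le_of_lt s.isLt) y]; omega
    obtain ⟨_, hmax⟩ := pick_spec A hpos (g A hpos (s : ℕ)) (hne (s : ℕ) s.isLt)
    rw [F3 s]
    exact hmax y hynot
  -- description of labels
  have F5 : ∀ (s : Fin n) (x : Fin n) (d : Fin n),
      ((d : ℕ) ∈ lab A (g A hpos (s : ℕ)) x ↔ d < s ∧ A (ε d) x) := by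
    intro s x d
    have hlens : (g A hpos (s : ℕ)).length = (s : ℕ) := (g_spec A hpos _ (le_of_lt s.isLt)).1
    rw [lab, Finset.mem_filter, Finset.mem_range]
    constructor
    · rintro ⟨hds, hj, hA⟩
      rw [hlens] at hds
      refine ⟨hds, ?_⟩
      rw [F1 (s : ℕ) (le_of_lt s.isLt) (d : ℕ) hj] at hA
      convert hA using 2
    · rintro ⟨hds, hA⟩
      have hds' : (d : ℕ) < (s : ℕ) := hds
      have hj : (d : ℕ) < (g A hpos (s : ℕ)).length := by rw [hlens]; exact hds'
      refine ⟨hj, hj, ?_⟩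
      rw [F1 (s : ℕ) (le_of_lt s.isLt) (d : ℕ) hj]
      convert hA using 2
  -- decompose a key inequality
  have Fkey : ∀ (s : Fin n) (y x : Fin n),
      key A (g A hpos (s : ℕ)) y ≤ key A (g A hpos (s : ℕ)) x →
      (lab A (g A hpos (s : ℕ)) y = lab A (g A hpos (s : ℕ)) x ∧ y ≤ x) ∨
      (∃ m : ℕ, m ∈ lab A (g A hpos (s : ℕ)) x ∧ m ∉ lab A (g A hpos (s : ℕ)) y ∧
        ∀ j ∈ lab A (g A hpos (s : ℕ)) y, j ∉ lab A (g A hpos (s : ℕ)) x → j < m) := by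
    intro s y x h
    rw [key, key, Prod.Lex.toLex_le_toLex] at h
    rcases h with h | ⟨h1, h2⟩
    · right
      simp only at h
      rw [Finset.Colex.toColex_lt_toColex_iff_exists_forall_lt] at h
      obtain ⟨m, hm1, hm2, hm3⟩ := h
      exact ⟨m, hm1, hm2, hm3⟩
    · left
      simp only at h1 h2
      exact ⟨toColex_inj.1 h1, h2⟩
  refine ⟨ε, ?_, ?_⟩
  · -- four point condition
    intro i j k hij hjk hik hnij
    have hkey := F4 j (ε k) (by rw [Equiv.symm_apply_apply]; exact le_of_lt hjk)
    have hiS : (i : ℕ) ∈ lab A (g A hpos (j : ℕ)) (ε k) := (F5 j (ε k) i).2 ⟨hij, hik⟩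
    have hiT : (i : ℕ) ∉ lab A (g A hpos (j : ℕ)) (ε j) := by
      rw [F5 j (ε j) i]; tauto
    rcases Fkey j (ε k) (ε j) hkey with ⟨heq, _⟩ | ⟨m, hmT, hmS, hmax⟩
    · exact absurd (heq ▸ hiS) hiT
    · have hmj : m < (j : ℕ) := by
        have h' := lab_lt A _ (ε j) hmT
        rwa [(g_spec A hpos _ (le_of_lt j.isLt)).1] at h'
      have hmn : m < n := lt_trans hmj j.isLt
      have hdT : A (ε ⟨m, hmn⟩) (ε j) := ((F5 j (ε j) ⟨m, hmn⟩).1 hmT).2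
      have hdS : ¬ A (ε ⟨m, hmn⟩) (ε k) := fun hA =>
        hmS ((F5 j (ε k) ⟨m, hmn⟩).2 ⟨hmj, hA⟩)
      have him : (i : ℕ) < m := hmax (i : ℕ) hiS hiT
      exact ⟨⟨m, hmn⟩, him, hmj, hdT, hdS⟩
  · -- non-edge reversal
    have key_ind : ∀ s : ℕ, ∀ p q : Fin n, (ε.symm p : ℕ) = s → ¬ A p q → p < q →
        ε.symm q < ε.symm p := by
      intro s
      induction s using Nat.strong_induction_on with
      | _ s ih =>
        intro p q hs hnpq hpq
        by_contra hcon
        have hne' : ε.symm p ≠ ε.symm q := fun h => (ne_of_lt hpq) (ε.symm.injective h)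
        have hlt : (ε.symm p : ℕ) < (ε.symm q : ℕ) := by
          rcases lt_trichotomy ((ε.symm p : Fin n) : ℕ) ((ε.symm q : Fin n) : ℕ) with h | h | h
          · exact h
          · exact absurd (Fin.ext h) hne'
          · exact absurd h hcon
        have hεt : ε (ε.symm p) = p := Equiv.apply_symm_apply _ _
        have hkey := F4 (ε.symm p) q (le_of_lt hlt)
        rw [hεt] at hkey
        rcases Fkey (ε.symm p) q p hkey with ⟨_, hle⟩ | ⟨m, hmT, hmS, _⟩
        · exact absurd (lt_of_le_of_lt hle hpq) (lt_irrefl q)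
        · have hmt : m < ((ε.symm p : Fin n) : ℕ) := by
            have h' := lab_lt A _ p hmT
            rwa [(g_spec A hpos _ (le_of_lt (ε.symm p).isLt)).1] at h'
          have hmn : m < n := lt_trans hmt (ε.symm p).isLt
          have hdp : A (ε ⟨m, hmn⟩) p := ((F5 (ε.symm p) p ⟨m, hmn⟩).1 hmT).2
          have hdq : ¬ A (ε ⟨m, hmn⟩) q := fun hA =>
            hmS ((F5 (ε.symm p) q ⟨m, hmn⟩).2 ⟨hmt, hA⟩)
          have hesymm : ((ε.symm (ε ⟨m, hmn⟩) : Fin n) : ℕ) = m := by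
            rw [Equiv.symm_apply_apply]
          rcases lt_trichotomy (ε ⟨m, hmn⟩) q with h1 | h1 | h1
          · have h2 := ih m (by omega) (ε ⟨m, hmn⟩) q hesymm hdq h1
            have h3 : ((ε.symm q : Fin n) : ℕ) < m := by
              simpa [Fin.lt_def] using h2
            omega
          · exfalso
            have hq : ((ε.symm q : Fin n) : ℕ) = m := by
              rw [← h1, Equiv.symm_apply_apply]
            omega
          · rcases humb p q (ε ⟨m, hmn⟩) hpq h1 (hsym _ _ hdp) with h | h
            · exact hnpq h
            · exact hdq (hsym _ _ h)
    intro p q hnpq hpq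
    exact key_ind (ε.symm p : ℕ) p q rfl hnpq hpq

end LexDFSAux

/-- Every cocomparability graph (given with an umbrella-free ordering `σ`) admits an
ordering `τ` that (i) satisfies the LexDFS 4-point condition, (ii) is umbrella-free,
and (iii) reverses `σ` on non-edges: for `uv ∉ E`, `u ≺_σ v ↔ v ≺_τ u`.  In particular
every cocomparability graph has an ordering that is simultaneously a LexDFS ordering
and a cocomparability ordering. -/
theorem exists_lexdfs_cocomp_ordering {V : Type*} [Fintype V] (G : SimpleGraph V)
    {n : ℕ} (σ : Fin n ≃ V) (hσ : UmbrellaFree G σ) :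
    ∃ τ : Fin n ≃ V, FourPointLexDFS G τ ∧ UmbrellaFree G τ ∧
      ∀ u v : V, ¬ G.Adj u v → (σ.symm u < σ.symm v ↔ τ.symm v < τ.symm u) := by
  rcases Nat.eq_zero_or_pos n with hn | hpos
  · subst hn
    exact ⟨σ, fun i => i.elim0, fun i => i.elim0, fun u v _ => (σ.symm u).elim0⟩
  · obtain ⟨ε, h4, hrev⟩ := LexDFSAux.main_construction (fun i j => G.Adj (σ i) (σ j)) hpos
      (fun i j h => h.symm) hσ
    refine ⟨ε.trans σ, ?_, ?_, ?_⟩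
    · intro i j k hij hjk hik hnij
      exact h4 i j k hij hjk hik hnij
    · -- umbrella-freeness of τ from reversal + umbrella-freeness of σ
      intro i j k hij hjk hik
      by_contra hcon
      push_neg at hcon
      obtain ⟨h1, h2⟩ := hcon
      have hA1 : ¬ G.Adj (σ (ε i)) (σ (ε j)) := h1
      have hA2 : ¬ G.Adj (σ (ε j)) (σ (ε k)) := h2
      have hji : ε j < ε i := by
        rcases lt_trichotomy (ε i) (ε j) with h | h | h
        · have h' := hrev (ε i) (ε j) hA1 h
          simp only [Equiv.symm_apply_apply] at h'
          exact absurd (lt_trans hij h') (lt_irrefl i)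
        · exact absurd (ε.injective h) (ne_of_lt hij)
        · exact h
      have hkj : ε k < ε j := by
        rcases lt_trichotomy (ε j) (ε k) with h | h | h
        · have h' := hrev (ε j) (ε k) hA2 h
          simp only [Equiv.symm_apply_apply] at h'
          exact absurd (lt_trans hjk h') (lt_irrefl j)
        · exact absurd (ε.injective h) (ne_of_lt hjk)
        · exact h
      rcases hσ (ε k) (ε j) (ε i) hkj hji (hik.symm) with h | h
      · exact hA2 h.symm
      · exact hA1 h.symm
    · intro u v huv
      have hA : ¬ G.Adj (σ (σ.symm u)) (σ (σ.symm v)) := by simpa using huv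
      have hA' : ¬ G.Adj (σ (σ.symm v)) (σ (σ.symm u)) := by
        simpa using fun h : G.Adj (σ (σ.symm v)) (σ (σ.symm u)) => huv (by simpa using h.symm)
      have hτ : ∀ w : V, (ε.trans σ).symm w = ε.symm (σ.symm w) := fun w => rfl
      rw [hτ, hτ]
      constructor
      · intro h
        exact hrev (σ.symm u) (σ.symm v) hA h
      · intro h
        by_contra hcon
        rcases lt_trichotomy (σ.symm u) (σ.symm v) with h' | h' | h'
        · exact hcon h'
        · rw [h'] at h; exact absurd h (lt_irrefl _)
        · have h'' := hrev (σ.symm v) (σ.symm u) hA' h'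
          exact absurd (lt_trans h h'') (lt_irrefl _)
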